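/- For the accelerated (heavy-ball/Nesterov family) optimization method Ĝopt(z) = −α((1+γ)z − γ)/((z−1)(z−β)) with α > 0, 0 ≤ β < 1, γ ≥ 0: Ĝopt has a simple pole at z=1, (z−1)Ĝopt(z) = −α((1+γ)z−γ)/(z−β) is stable, Ĝopt is strictly proper, and for all sufficiently small ε > 0 the two zeros of 1 − εĜopt(z) (roots of (z−1)(z−β) + εα((1+γ)z − γ)) lie in the open unit disk. -/

import Mathlib

open Polynomial

lemma real_quad_root_bound (b c r : ℝ) (hr : r^2 + b*r + c = 0)
    (h1 : 0 < 1 + b + c) (h2 : 0 < 1 - b + c) (hc : c < 1) : |r| < 1 := by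
  rw [abs_lt]
  constructor
  · nlinarith [sq_nonneg (r+1), sq_nonneg (r-1)]
  · nlinarith [sq_nonneg (r+1), sq_nonneg (r-1)]

/-- For the accelerated optimization method
`Ĝopt(z) = −α((1+γ)z − γ)/((z−1)(z−β))` with `α > 0`, `0 ≤ β < 1`, `γ ≥ 0`:
`Ĝopt` has a simple pole at `z = 1`; `(z−1)Ĝopt(z) = −α((1+γ)z−γ)/(z−β)` is stable
(its only pole `β` lies in the open unit disk); `Ĝopt` is strictly proper; and for
all sufficiently small `ε > 0` both zeros of `1 − εĜopt(z)` (the roots of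
`(z−1)(z−β) + εα((1+γ)z − γ)`) lie in the open unit disk. -/
theorem accelerated_method_is_optimization_method (α β γ : ℝ)
    (hα : 0 < α) (hβ0 : 0 ≤ β) (hβ1 : β < 1) (hγ : 0 ≤ γ) :
    let q : Polynomial ℂ := (Polynomial.X - 1) * (Polynomial.X - Polynomial.C (β : ℂ))
    let p : Polynomial ℂ :=
      Polynomial.C (-(α : ℂ)) * (Polynomial.C ((1 + γ : ℝ) : ℂ) * Polynomial.X
        - Polynomial.C ((γ : ℝ) : ℂ))
    (q.eval 1 = 0 ∧ q.rootMultiplicity 1 = 1) ∧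
    (∀ z : ℂ, z - (β : ℂ) = 0 → ‖z‖ < 1) ∧
    p.natDegree < q.natDegree ∧
    (∃ ε₀ : ℝ, 0 < ε₀ ∧ ∀ ε : ℝ, 0 < ε → ε < ε₀ →
      ∀ z : ℂ, (z - 1) * (z - (β : ℂ)) + (ε : ℂ) * (α : ℂ) * (((1 + γ : ℝ) : ℂ) * z - (γ : ℝ)) = 0 →
        ‖z‖ < 1) := by
  intro q p
  have hβne : (β : ℂ) ≠ 1 := by
    intro h
    exact absurd (by exact_mod_cast h) hβ1.ne
  refine ⟨⟨by simp [q], ?_⟩, ?_, ?_, ?_⟩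
  · -- root multiplicity
    have hq1 : (X - 1 : ℂ[X]) = X - C 1 := by simp
    have hne : ((X - 1) * (X - C (β : ℂ)) : ℂ[X]) ≠ 0 := by
      apply mul_ne_zero
      · rw [hq1]; exact X_sub_C_ne_zero _
      · exact X_sub_C_ne_zero _
    show rootMultiplicity 1 ((X - 1) * (X - C (β : ℂ))) = 1
    rw [rootMultiplicity_mul hne, hq1, rootMultiplicity_X_sub_C_self,
      rootMultiplicity_eq_zero (by simp [IsRoot, sub_eq_zero, hβne.symm])]
  · intro z hz
    rw [sub_eq_zero] at hz
    rw [hz, Complex.norm_real, Real.norm_eq_abs, abs_of_nonneg hβ0]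
    exact hβ1
  · -- degrees
    have hq : q.natDegree = 2 := by
      show ((X - 1) * (X - C (β : ℂ))).natDegree = 2
      compute_degree!
    have hp : p.natDegree ≤ 1 := by
      show (C (-(α : ℂ)) * (C ((1 + γ : ℝ) : ℂ) * X - C ((γ : ℝ) : ℂ))).natDegree ≤ 1
      compute_degree
    omega
  · -- main part
    refine ⟨(1 + β) / (α * (1 + 2 * γ)), by positivity, ?_⟩
    intro ε hε hε' z hz
    have hεa : ε * (α * (1 + 2 * γ)) < 1 + β := by
      rw [lt_div_iff₀ (by positivity)] at hε'
      linarith [hε']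
    set b : ℝ := ε * α * (1 + γ) - (1 + β) with hb
    set c : ℝ := β - ε * α * γ with hcdef
    have hbC : (b : ℂ) = (ε : ℂ) * α * (1 + γ) - (1 + β) := by rw [hb]; push_cast; ring
    have hcC : (c : ℂ) = (β : ℂ) - ε * α * γ := by rw [hcdef]; push_cast; ring
    have hz' : z ^ 2 + (b : ℂ) * z + (c : ℂ) = 0 := by
      push_cast at hz
      linear_combination hz + z * hbC + hcC
    have h1 : 0 < 1 + b + c := by
      have : 1 + b + c = ε * α := by rw [hb, hcdef]; ring
      rw [this]; positivity
    have h2 : 0 < 1 - b + c := by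
      have : 1 - b + c = 2 * (1 + β) - ε * α * (1 + 2 * γ) := by rw [hb, hcdef]; ring
      rw [this]; nlinarith [hεa]
    have hc1 : c < 1 := by
      have : 0 ≤ ε * α * γ := by positivity
      rw [hcdef]; linarith
    by_cases him : z.im = 0
    · have hzr : z = (z.re : ℂ) := Complex.ext rfl (by simp [him])
      rw [hzr] at hz'
      have hr : z.re ^ 2 + b * z.re + c = 0 := by exact_mod_cast hz'
      have hlt := real_quad_root_bound b c z.re hr h1 h2 hc1
      rw [hzr, Complex.norm_real, Real.norm_eq_abs]
      exact hlt
    · have hconj : (starRingEnd ℂ z) ^ 2 + (b : ℂ) * (starRingEnd ℂ z) + (c : ℂ) = 0 := by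
        have h := congrArg (starRingEnd ℂ) hz'
        simpa using h
      have hne : z - starRingEnd ℂ z ≠ 0 := by
        intro h
        apply him
        have h2 := congrArg Complex.im h
        simp at h2
        linarith
      have hsum : z + starRingEnd ℂ z = -(b : ℂ) := by
        have hdiff : (z - starRingEnd ℂ z) * (z + starRingEnd ℂ z + (b : ℂ)) = 0 := by
          linear_combination hz' - hconj
        have h0 := (mul_eq_zero.mp hdiff).resolve_left hne
        linear_combination h0
      have hprod : (Complex.normSq z : ℂ) = (c : ℂ) := by
        rw [← Complex.mul_conj]
        linear_combination z * hsum - hz'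
      have hnsq : Complex.normSq z = c := by exact_mod_cast hprod
      have habs : ‖z‖ ^ 2 = c := by rw [Complex.sq_norm, hnsq]
      nlinarith [norm_nonneg z]
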